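/- For every measurable regressor f with E[(f(X)−Y)²] < ∞, the excess truncated loss is bounded by the excess squared loss: L̃(f) − L̃* ≤ L₂(f) − L₂*, where L̃* and L₂* denote the infima of L̃ and L₂ over all measurable functions 𝒳 → ℝ (both attained at the conditional mean f̄). -/

import Mathlib

open MeasureTheory Filter

noncomputable section

/-- The regression-with-rejection (RwR) loss
`L_RwR(f,r) = E[ r(X)·(f(X)−Y)² + (1−r(X))·c ]`. -/
def LRwR {Ω : Type*} [MeasurableSpace Ω] {d : ℕ} (μ : Measure Ω)
    (X : Ω → EuclideanSpace ℝ (Fin d)) (Y : Ω → ℝ) (c : ℝ)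
    (f r : EuclideanSpace ℝ (Fin d) → ℝ) : ℝ :=
  ∫ ω, r (X ω) * (f (X ω) - Y ω) ^ 2 + (1 - r (X ω)) * c ∂μ

/-- `g : 𝒳 → ℝ` is a measurable version of the conditional expectation
`E[Z | X]`, i.e. `g(X) = E[Z | σ(X)]` a.s. -/
def IsCondMean {Ω : Type*} [MeasurableSpace Ω] {d : ℕ} (μ : Measure Ω)
    (X : Ω → EuclideanSpace ℝ (Fin d)) (Z : Ω → ℝ)
    (g : EuclideanSpace ℝ (Fin d) → ℝ) : Prop :=
  (fun ω => g (X ω)) =ᵐ[μ] μ[Z | MeasurableSpace.comap X inferInstance]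

/-- the excess truncated loss is bounded by the excess squared
loss, where both infima over all measurable regressors are attained at the
conditional mean `f̄` (so `L̃* = L̃(f̄)` and `L₂* = L₂(f̄)`). -/
theorem stmt12 {Ω : Type*} [MeasurableSpace Ω] {d : ℕ}
    (μ : Measure Ω) [IsProbabilityMeasure μ]
    (X : Ω → EuclideanSpace ℝ (Fin d)) (Y : Ω → ℝ)
    (hX : Measurable X) (hY : Measurable Y)
    (hY2 : Integrable (fun ω => (Y ω) ^ 2) μ)
    (c : ℝ) (hc : 0 < c)
    (fbar : EuclideanSpace ℝ (Fin d) → ℝ) (hfbar_m : Measurable fbar)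
    (hfbar : IsCondMean μ X Y fbar)
    (hfbar2 : Integrable (fun ω => (fbar (X ω) - Y ω) ^ 2) μ)
    (Rbar : EuclideanSpace ℝ (Fin d) → ℝ) (hRbar_m : Measurable Rbar)
    (hRbar : IsCondMean μ X (fun ω => (fbar (X ω) - Y ω) ^ 2) Rbar)
    (f : EuclideanSpace ℝ (Fin d) → ℝ) (hf : Measurable f)
    (hf2 : Integrable (fun ω => (f (X ω) - Y ω) ^ 2) μ)
    (Rf : EuclideanSpace ℝ (Fin d) → ℝ) (hRf_m : Measurable Rf)
    (hRf : IsCondMean μ X (fun ω => (f (X ω) - Y ω) ^ 2) Rf) :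
    (∫ ω, min (Rf (X ω)) c ∂μ) - ∫ ω, min (Rbar (X ω)) c ∂μ
      ≤ (∫ ω, (f (X ω) - Y ω) ^ 2 ∂μ) - ∫ ω, (fbar (X ω) - Y ω) ^ 2 ∂μ := by
  classical
  have hm : MeasurableSpace.comap X inferInstance ≤ ‹MeasurableSpace Ω› := hX.comap_le
  set m : MeasurableSpace Ω := MeasurableSpace.comap X inferInstance with hm_def
  haveI : SigmaFinite (μ.trim hm) := by
    have : IsFiniteMeasure (μ.trim hm) := isFiniteMeasure_trim hm
    infer_instance
  have hXm : Measurable[m] X := measurable_iff_comap_le.mpr le_rfl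
  -- notation
  set g : Ω → ℝ := fun ω => f (X ω) with hg_def
  set gb : Ω → ℝ := fun ω => fbar (X ω) with hgb_def
  set D : Ω → ℝ := fun ω => g ω - gb ω with hD_def
  set q : Ω → ℝ := fun ω => gb ω - Y ω with hq_def
  have hg_m : Measurable[m] g := hf.comp hXm
  have hgb_m : Measurable[m] gb := hfbar_m.comp hXm
  have hD_sm : StronglyMeasurable[m] D := (hg_m.sub hgb_m).stronglyMeasurable
  -- L² facts
  have hq_asm :=
    ((hgb_m.mono hm le_rfl).sub hY).aestronglyMeasurable (μ := μ)
  have hgY_asm :=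
    ((hg_m.mono hm le_rfl).sub hY).aestronglyMeasurable (μ := μ)
  have hq2 : MemLp q 2 μ := (memLp_two_iff_integrable_sq hq_asm).mpr hfbar2
  have hgY2 : MemLp (fun ω => g ω - Y ω) 2 μ :=
    (memLp_two_iff_integrable_sq hgY_asm).mpr hf2
  have hD2 : MemLp D 2 μ := by
    have h := hgY2.sub hq2
    have e : (fun ω => g ω - Y ω) - q = D := by
      funext ω
      show g ω - Y ω - (gb ω - Y ω) = g ω - gb ω
      ring
    rwa [e] at h
  have hDsq_int : Integrable (fun ω => D ω ^ 2) μ :=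
    (memLp_two_iff_integrable_sq hD2.aestronglyMeasurable).mp hD2
  have hDq_int : Integrable (D * q) μ := by
    have hpqr : (1 : ENNReal) / 1 = 1 / 2 + 1 / 2 := by
      rw [ENNReal.div_add_div_same, one_div_one, one_add_one_eq_two,
        ENNReal.div_self two_ne_zero ENNReal.ofNat_ne_top]
    have h := hq2.smul (φ := D) hD2 (r := 1)
    rw [memLp_one_iff_integrable] at h
    exact h
  have hY_int : Integrable Y μ := by
    have hYasm := hY.aestronglyMeasurable (μ := μ)
    have hY2' : MemLp Y 2 μ := (memLp_two_iff_integrable_sq hYasm).mpr hY2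
    exact hY2'.integrable one_le_two
  have hgb_int : Integrable gb μ :=
    (integrable_condExp (m := m)).congr hfbar.symm
  have hq_int : Integrable q μ := hgb_int.sub hY_int
  -- E[q | m] = 0 a.e.
  have hcond_q : μ[q|m] =ᵐ[μ] 0 := by
    have h1 : μ[q|m] =ᵐ[μ] μ[gb|m] - μ[Y|m] := condExp_sub hgb_int hY_int m
    have h2 : μ[gb|m] = gb :=
      condExp_of_stronglyMeasurable hm hgb_m.stronglyMeasurable hgb_int
    have h3 : gb =ᵐ[μ] μ[Y|m] := hfbar
    filter_upwards [h1, h3] with ω e1 e3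
    simp only [Pi.sub_apply, Pi.zero_apply] at *
    rw [e1, congrFun h2 ω, e3]; ring
  -- decomposition: (g-Y)^2 = D^2 + 2*(D*q) + q^2
  have hdecomp : (fun ω => (g ω - Y ω) ^ 2)
      = fun ω => D ω ^ 2 + 2 * (D ω * q ω) + q ω ^ 2 := by
    funext ω; simp only [hD_def, hq_def]; ring
  have hcond_pull : μ[D * q|m] =ᵐ[μ] D * μ[q|m] :=
    condExp_mul_of_stronglyMeasurable_left hD_sm hDq_int hq_int
  -- key identity: Rf∘X =ᵐ Rbar∘X + D^2
  have hkey : (fun ω => Rf (X ω)) =ᵐ[μ] fun ω => Rbar (X ω) + D ω ^ 2 := by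
    have e0 : μ[fun ω => (g ω - Y ω) ^ 2|m]
        =ᵐ[μ] μ[(fun ω => D ω ^ 2) + (fun ω => 2 * (D ω * q ω)) + (fun ω => q ω ^ 2)|m] := by
      apply condExp_congr_ae
      filter_upwards with ω
      simp only [Pi.add_apply]; simp only [hD_def, hq_def]; ring
    have hint2 : Integrable (fun ω => 2 * (D ω * q ω)) μ := by
      have := hDq_int.const_mul 2
      simpa [Pi.mul_apply] using this
    have e1 : μ[(fun ω => D ω ^ 2) + (fun ω => 2 * (D ω * q ω)) + (fun ω => q ω ^ 2)|m]
        =ᵐ[μ] μ[fun ω => D ω ^ 2|m] + μ[fun ω => 2 * (D ω * q ω)|m] + μ[fun ω => q ω ^ 2|m] := by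
      have a1 := condExp_add (hDsq_int.add hint2) hfbar2 (m := m)
      have a2 := condExp_add hDsq_int hint2 (m := m)
      filter_upwards [a1, a2] with ω e1 e2
      simp only [Pi.add_apply] at *
      rw [e1, e2]
    have e2 : μ[fun ω => D ω ^ 2|m] = fun ω => D ω ^ 2 :=
      condExp_of_stronglyMeasurable hm (hD_sm.pow 2) hDsq_int
    have e3 : μ[fun ω => 2 * (D ω * q ω)|m] =ᵐ[μ] 0 := by
      have b1 : μ[fun ω => 2 * (D ω * q ω)|m] =ᵐ[μ] 2 • μ[D * q|m] := by
        have := condExp_smul (2 : ℝ) (D * q) (m := m) (μ := μ)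
        have e : (fun ω => 2 * (D ω * q ω)) = (2 : ℝ) • (D * q) := by
          funext ω; simp [smul_eq_mul]
        rw [e]; exact this.trans (EventuallyEq.of_eq (by rw [two_smul, two_smul]))
      filter_upwards [b1, hcond_pull, hcond_q] with ω c1 c2 c3
      simp only [Pi.smul_apply, Pi.mul_apply, Pi.zero_apply, smul_eq_mul] at *
      rw [c1, c2, c3]; ring
    filter_upwards [hRf, hRbar, e0, e1, e3] with ω w1 w2 w3 w4 w6
    simp only [Pi.add_apply, Pi.zero_apply] at *
    rw [w1, w3, w4, congrFun e2 ω, w6, ← w2]; ring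
  -- consequences
  have hRbar_le : ∀ᵐ ω ∂μ, Rbar (X ω) ≤ Rf (X ω) := by
    filter_upwards [hkey] with ω h
    rw [h]; nlinarith [sq_nonneg (D ω)]
  -- integrability of Rf∘X, Rbar∘X and mins
  have hRfX_int : Integrable (fun ω => Rf (X ω)) μ :=
    (integrable_condExp (m := m)).congr hRf.symm
  have hRbarX_int : Integrable (fun ω => Rbar (X ω)) μ :=
    (integrable_condExp (m := m)).congr hRbar.symm
  have hminf_int : Integrable (fun ω => min (Rf (X ω)) c) μ := by
    apply Integrable.mono' (hRfX_int.add (integrable_const c))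
    · exact ((hRf_m.comp hX).min measurable_const).aestronglyMeasurable
    · have h0 : ∀ᵐ ω ∂μ, 0 ≤ Rf (X ω) := by
        have := condExp_nonneg (m := m) (f := fun ω => (g ω - Y ω) ^ 2)
          (Filter.Eventually.of_forall fun ω => sq_nonneg _) (μ := μ)
        filter_upwards [hRf, this] with ω h1 h2
        rw [h1]; exact h2
      filter_upwards [h0] with ω h0
      rw [Real.norm_eq_abs, abs_of_nonneg (le_min h0 hc.le)]
      calc min (Rf (X ω)) c ≤ Rf (X ω) := min_le_left _ _
        _ ≤ Rf (X ω) + c := by linarith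
  have hminb_int : Integrable (fun ω => min (Rbar (X ω)) c) μ := by
    apply Integrable.mono' (hRbarX_int.add (integrable_const c))
    · exact ((hRbar_m.comp hX).min measurable_const).aestronglyMeasurable
    · have h0 : ∀ᵐ ω ∂μ, 0 ≤ Rbar (X ω) := by
        have := condExp_nonneg (m := m) (f := fun ω => (gb ω - Y ω) ^ 2)
          (Filter.Eventually.of_forall fun ω => sq_nonneg _) (μ := μ)
        filter_upwards [hRbar, this] with ω h1 h2
        rw [h1]; exact h2
      filter_upwards [h0] with ω h0
      rw [Real.norm_eq_abs, abs_of_nonneg (le_min h0 hc.le)]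
      calc min (Rbar (X ω)) c ≤ Rbar (X ω) := min_le_left _ _
        _ ≤ Rbar (X ω) + c := by linarith
  -- integral identities
  have hIRf : ∫ ω, Rf (X ω) ∂μ = ∫ ω, (g ω - Y ω) ^ 2 ∂μ := by
    rw [integral_congr_ae hRf, integral_condExp hm]
  have hIRb : ∫ ω, Rbar (X ω) ∂μ = ∫ ω, (gb ω - Y ω) ^ 2 ∂μ := by
    rw [integral_congr_ae hRbar, integral_condExp hm]
  -- main inequality
  have hmain : ∫ ω, min (Rf (X ω)) c ∂μ - ∫ ω, min (Rbar (X ω)) c ∂μ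
      ≤ ∫ ω, Rf (X ω) ∂μ - ∫ ω, Rbar (X ω) ∂μ := by
    rw [← integral_sub hminf_int hminb_int, ← integral_sub hRfX_int hRbarX_int]
    apply integral_mono_ae (hminf_int.sub hminb_int) (hRfX_int.sub hRbarX_int)
    filter_upwards [hRbar_le] with ω hle
    rcases le_total (Rbar (X ω)) c with h | h <;> rcases le_total (Rf (X ω)) c with h' | h' <;>
      simp [min_eq_left, min_eq_right, h, h'] <;> linarith
  calc ∫ ω, min (Rf (X ω)) c ∂μ - ∫ ω, min (Rbar (X ω)) c ∂μ
      ≤ ∫ ω, Rf (X ω) ∂μ - ∫ ω, Rbar (X ω) ∂μ := hmain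
    _ = (∫ ω, (f (X ω) - Y ω) ^ 2 ∂μ) - ∫ ω, (fbar (X ω) - Y ω) ^ 2 ∂μ := by
        rw [hIRf, hIRb]
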